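/- Let N be odd and ζ = exp(2πi/N). The rational function Q(x) = ∏_{j=0}^{N-1} S(x | zζ^j), where z is any N-th root of 1 - x^N and S(x|z) = Σ_{k=1}^{N} ∏_{i=1}^{k} z/(1-xζ^i), is independent of the choice of z and satisfies Q(xζ) = Q(x) · (1-xζ)^N/(1-x^N). -/

import Mathlib

open Complex Real

/-- `S(x|z) = Σ_{k=1}^{N} ∏_{i=1}^{k} z/(1 - xζ^i)`. -/
noncomputable def Sfun (N : ℕ) (ζ x z : ℂ) : ℂ :=
  ∑ k ∈ Finset.range N, ∏ i ∈ Finset.range (k + 1), z / (1 - x * ζ ^ (i + 1))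

/-- Shifting the index in a product over `range N` of an `N`-periodic-ish function. -/
lemma prod_range_shift {M : Type*} [CommMonoid M] (h : ℕ → M) (N : ℕ) (hNpos : 0 < N)
    (hh : h N = h 0) :
    ∏ j ∈ Finset.range N, h (j + 1) = ∏ j ∈ Finset.range N, h j := by
  have h1 : ∏ j ∈ Finset.range N, h (j + 1) = ∏ j ∈ Finset.Ico 1 (N + 1), h j := by
    rw [Finset.prod_Ico_eq_prod_range]
    simp [add_comm]
  rw [h1, Finset.prod_Ico_succ_top hNpos, hh, Finset.range_eq_Ico,
    Finset.prod_eq_prod_Ico_succ_bot hNpos, mul_comm]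

lemma sum_range_shift {M : Type*} [AddCommMonoid M] (h : ℕ → M) (N : ℕ) (hNpos : 0 < N)
    (hh : h N = h 0) :
    ∑ j ∈ Finset.range N, h (j + 1) = ∑ j ∈ Finset.range N, h j := by
  have h1 : ∑ j ∈ Finset.range N, h (j + 1) = ∑ j ∈ Finset.Ico 1 (N + 1), h j := by
    rw [Finset.sum_Ico_eq_sum_range]
    simp [add_comm]
  rw [h1, Finset.sum_Ico_succ_top hNpos, hh, Finset.range_eq_Ico,
    Finset.sum_eq_sum_Ico_succ_bot hNpos, add_comm]

lemma prod_range_rot {M : Type*} [CommMonoid M] (f : M → M) (ζ : M) (N : ℕ) (hNpos : 0 < N)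
    (hζN : ζ ^ N = 1) (m : ℕ) :
    ∏ j ∈ Finset.range N, f (ζ ^ (j + m)) = ∏ j ∈ Finset.range N, f (ζ ^ j) := by
  induction m with
  | zero => simp
  | succ m ih =>
    have : ∏ j ∈ Finset.range N, f (ζ ^ (j + (m + 1)))
        = ∏ j ∈ Finset.range N, f (ζ ^ ((j + 1) + m)) := by
      apply Finset.prod_congr rfl
      intro j _
      ring_nf
    rw [this, prod_range_shift (fun j => f (ζ ^ (j + m))) N hNpos, ih]
    have : ζ ^ (N + m) = ζ ^ (0 + m) := by
      rw [pow_add, hζN, one_mul, zero_add]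
    simp only [this]

lemma prod_one_sub_mul_pow {N : ℕ} {ζ : ℂ} (hNpos : 0 < N) (hprim : IsPrimitiveRoot ζ N)
    (x : ℂ) : ∏ i ∈ Finset.range N, (1 - x * ζ ^ i) = 1 - x ^ N := by
  rcases eq_or_ne x 0 with rfl | hx
  · simp [hNpos.ne']
  · have hpoly := X_pow_sub_C_eq_prod hprim hNpos (one_pow N)
    have := congrArg (Polynomial.eval x⁻¹) hpoly
    simp only [Polynomial.eval_sub, Polynomial.eval_pow, Polynomial.eval_X, Polynomial.eval_C,
      Polynomial.eval_prod, Polynomial.eval_mul, mul_one] at this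
    have key : ∏ i ∈ Finset.range N, (1 - x * ζ ^ i)
        = x ^ N * ∏ i ∈ Finset.range N, (x⁻¹ - ζ ^ i) := by
      have hxN : x ^ N = ∏ _i ∈ Finset.range N, x := by simp
      rw [hxN, ← Finset.prod_mul_distrib]
      apply Finset.prod_congr rfl
      intro i _
      field_simp
    rw [key, ← this]
    field_simp
    rw [one_div, inv_pow, mul_sub, mul_inv_cancel₀ (pow_ne_zero _ hx), mul_one]



lemma Sfun_mul_zeta {N : ℕ} {ζ x z : ℂ} (hNpos : 0 < N) (hprim : IsPrimitiveRoot ζ N)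
    (hz : z ^ N = 1 - x ^ N) (hz0 : z ≠ 0) (hden : ∀ j : ℕ, 1 - x * ζ ^ j ≠ 0) :
    Sfun N ζ (x * ζ) z = (1 - x * ζ) / z * Sfun N ζ x z := by
  have hζN : ζ ^ N = 1 := hprim.pow_eq_one
  have h1x : (1 : ℂ) - x ^ N ≠ 0 := by rw [← hz]; exact pow_ne_zero _ hz0
  set g : ℕ → ℂ := fun i => z / (1 - x * ζ ^ (i + 1)) with hg
  set P : ℕ → ℂ := fun k => ∏ i ∈ Finset.range (k + 1), g i with hP
  have hprodden : ∏ i ∈ Finset.range N, (1 - x * ζ ^ (i + 1)) = 1 - x ^ N := by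
    rw [prod_range_shift (fun i => 1 - x * ζ ^ i) N hNpos (by simp [hζN])]
    exact prod_one_sub_mul_pow hNpos hprim x
  have hPN : P N = P 0 := by
    show ∏ i ∈ Finset.range (N + 1), g i = ∏ i ∈ Finset.range (0 + 1), g i
    rw [Finset.prod_range_succ, zero_add, Finset.prod_range_one]
    have h1 : ∏ i ∈ Finset.range N, g i = 1 := by
      simp only [hg]
      rw [Finset.prod_div_distrib, Finset.prod_const, Finset.card_range, hprodden, hz,
        div_self h1x]
    rw [h1, one_mul]
    simp only [hg]
    rw [pow_succ, hζN, one_mul, pow_one]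
  have hterm : ∀ k, (∏ i ∈ Finset.range (k + 1), z / (1 - x * ζ * ζ ^ (i + 1)))
      = (1 - x * ζ) / z * P (k + 1) := by
    intro k
    have hs : P (k + 1) = (∏ i ∈ Finset.range (k + 1), g (i + 1)) * g 0 :=
      Finset.prod_range_succ' g (k + 1)
    rw [hs]
    have hg0 : (1 - x * ζ) / z * g 0 = 1 := by
      have hd : 1 - x * ζ ≠ 0 := by have := hden 1; rwa [pow_one] at this
      simp only [hg, zero_add, pow_one]
      field_simp
    rw [mul_comm (∏ i ∈ Finset.range (k + 1), g (i + 1)) (g 0), ← mul_assoc, hg0, one_mul]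
    apply Finset.prod_congr rfl
    intro i _
    simp only [hg]
    congr 2
    ring
  show ∑ k ∈ Finset.range N, ∏ i ∈ Finset.range (k + 1), z / (1 - x * ζ * ζ ^ (i + 1))
      = (1 - x * ζ) / z * ∑ k ∈ Finset.range N, P k
  rw [Finset.mul_sum]
  calc ∑ k ∈ Finset.range N, ∏ i ∈ Finset.range (k + 1), z / (1 - x * ζ * ζ ^ (i + 1))
      = ∑ k ∈ Finset.range N, (1 - x * ζ) / z * P (k + 1) := by
        exact Finset.sum_congr rfl fun k _ => hterm k
    _ = (1 - x * ζ) / z * ∑ k ∈ Finset.range N, P (k + 1) := by rw [Finset.mul_sum]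
    _ = (1 - x * ζ) / z * ∑ k ∈ Finset.range N, P k := by
        rw [sum_range_shift P N hNpos hPN]
    _ = ∑ k ∈ Finset.range N, (1 - x * ζ) / z * P k := by rw [Finset.mul_sum]

/-- For `N` odd and `ζ = exp(2πi/N)`, the function `Q(x) = ∏_{j=0}^{N-1} S(x|zζ^j)`,
where `z` is any `N`-th root of `1-x^N`, is independent of the choice of `z` and
satisfies `Q(xζ) = Q(x)·(1-xζ)^N/(1-x^N)`. -/
theorem Qfun_indep_and_shift (N : ℕ) (hN : Odd N) (hNpos : 0 < N)
    (ζ : ℂ) (hζ : ζ = Complex.exp (2 * π * Complex.I / N))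
    (x z z' : ℂ) (hz : z ^ N = 1 - x ^ N) (hz' : z' ^ N = 1 - x ^ N)
    (hxN : x ^ N ≠ 1)
    (hden : ∀ j : ℕ, 1 - x * ζ ^ j ≠ 0) :
    (∏ j ∈ Finset.range N, Sfun N ζ x (z * ζ ^ j)) =
      (∏ j ∈ Finset.range N, Sfun N ζ x (z' * ζ ^ j)) ∧
    (∏ j ∈ Finset.range N, Sfun N ζ (x * ζ) (z * ζ ^ j)) =
      (∏ j ∈ Finset.range N, Sfun N ζ x (z * ζ ^ j)) * (1 - x * ζ) ^ N / (1 - x ^ N) := by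
  
  have : NeZero N := ⟨hNpos.ne'⟩
  have hprim : IsPrimitiveRoot ζ N := hζ ▸ Complex.isPrimitiveRoot_exp N hNpos.ne'
  have hζN : ζ ^ N = 1 := hprim.pow_eq_one
  have h1x : (1 : ℂ) - x ^ N ≠ 0 := sub_ne_zero.mpr (Ne.symm hxN)
  have hz0 : z ≠ 0 := by
    intro h; rw [h, zero_pow hNpos.ne'] at hz; exact h1x hz.symm
  have hz'0 : z' ≠ 0 := by
    intro h; rw [h, zero_pow hNpos.ne'] at hz'; exact h1x hz'.symm
  have hζ0 : ζ ≠ 0 := by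
    intro h; rw [h, zero_pow hNpos.ne'] at hζN; exact zero_ne_one hζN
  constructor
  · -- independence of z
    have hpow : (z' / z) ^ N = 1 := by
      rw [div_pow, hz', hz, div_self h1x]
    obtain ⟨m, -, hm⟩ := hprim.eq_pow_of_pow_eq_one hpow
    have hz'' : z' = z * ζ ^ m := by
      rw [eq_div_iff hz0] at hm; rw [← hm, mul_comm]
    rw [hz'']
    have hre : ∀ j : ℕ, z * ζ ^ m * ζ ^ j = z * ζ ^ (j + m) := by
      intro j; rw [pow_add]; ring
    calc (∏ j ∈ Finset.range N, Sfun N ζ x (z * ζ ^ j))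
        = ∏ j ∈ Finset.range N, (fun w => Sfun N ζ x (z * w)) (ζ ^ j) := rfl
      _ = ∏ j ∈ Finset.range N, (fun w => Sfun N ζ x (z * w)) (ζ ^ (j + m)) := by
          rw [prod_range_rot (fun w => Sfun N ζ x (z * w)) ζ N hNpos hζN m]
      _ = ∏ j ∈ Finset.range N, Sfun N ζ x (z * ζ ^ m * ζ ^ j) := by
          exact Finset.prod_congr rfl fun j _ => by rw [hre j]
  · -- functional equation
    have hSS : ∀ j : ℕ, Sfun N ζ (x * ζ) (z * ζ ^ j)
        = (1 - x * ζ) / (z * ζ ^ j) * Sfun N ζ x (z * ζ ^ j) := by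
      intro j
      apply Sfun_mul_zeta hNpos hprim _ (mul_ne_zero hz0 (pow_ne_zero _ hζ0)) hden
      rw [mul_pow, ← pow_mul, mul_comm j N, pow_mul, hζN, one_pow, mul_one, hz]
    rw [Finset.prod_congr rfl fun j _ => hSS j, Finset.prod_mul_distrib]
    have hrot : ∏ j ∈ Finset.range N, ((1 - x * ζ) / (z * ζ ^ j))
        = (1 - x * ζ) ^ N / (1 - x ^ N) := by
      rw [Finset.prod_div_distrib, Finset.prod_const, Finset.card_range]
      congr 1
      rw [Finset.prod_mul_distrib, Finset.prod_const, Finset.card_range,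
        Finset.prod_pow_eq_pow_sum, hz]
      obtain ⟨mm, hmm⟩ := hN
      have hsum : ∑ j ∈ Finset.range N, j = N * mm := by
        have h2 := Finset.sum_range_id_mul_two N
        have h3 : N - 1 = 2 * mm := by omega
        rw [h3] at h2
        have h4 : (∑ j ∈ Finset.range N, j) * 2 = (N * mm) * 2 := by rw [h2]; ring
        exact Nat.eq_of_mul_eq_mul_right (by norm_num) h4
      rw [hsum, pow_mul, hζN, one_pow, mul_one]
    rw [hrot]
    ring
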